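/- Let q be a positive integer divisible by 4, N a positive integer divisible by 4, and c ∈ ℤ⁴ a vector with at least one odd coordinate. Then the sum S_q(c) = Σ*_{a mod q} Σ_{b mod q, b∈(ℤ/q)⁴} e((a(F(b) − N) + b·c)/q) vanishes, where F(x) = x₁²+x₂²+x₃²+x₄². -/
import Mathlib


open Finset

/-- `e(x) = exp(2πi x)`. -/
noncomputable def e (x : ℝ) : ℂ := Complex.exp (2 * Real.pi * Complex.I * x)

/-- The Kloosterman sum `S(m,n;q) = Σ_{x mod q, (x,q)=1} e((m x + n x̄)/q)`. -/
noncomputable def kloosterman (m n : ℤ) (q : ℕ) : ℂ :=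
  ∑ x ∈ (Finset.range q).filter (fun x => Nat.Coprime x q),
    e (((m * (x : ℤ) + n * ((((x : ZMod q)⁻¹).val : ℤ)) : ℤ) : ℝ) / q)

/-- The quadratic form `F(x) = x₁² + x₂² + x₃² + x₄²`. -/
def F (c : Fin 4 → ℤ) : ℤ := ∑ i, (c i) ^ 2

/-- The exponential sum `S_q(c) = Σ*_{a mod q} Σ_{b mod q, b ∈ (ℤ/q)⁴}
    e((a(F(b) - N) + b·c)/q)`. -/
noncomputable def Sq (q : ℕ) (N : ℤ) (c : Fin 4 → ℤ) : ℂ :=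
  ∑ a ∈ (Finset.range q).filter (fun a => Nat.Coprime a q),
    ∑ b : Fin 4 → Fin q,
      e ((((a : ℤ) * (F (fun i => ((b i : ℕ) : ℤ)) - N) +
            ∑ i, ((b i : ℕ) : ℤ) * c i : ℤ) : ℝ) / q)

lemma e_add (x y : ℝ) : e (x + y) = e x * e y := by
  simp [e, mul_add, Complex.exp_add]

lemma e_int (m : ℤ) : e (m : ℝ) = 1 := by
  have : (2 * (Real.pi : ℂ) * Complex.I * ((m : ℝ) : ℂ)) = m * (2 * Real.pi * Complex.I) := by
    push_cast; ring
  rw [e, this, Complex.exp_int_mul_two_pi_mul_I]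

lemma e_half_odd (m : ℤ) (hm : Odd m) : e ((m : ℝ) / 2) = -1 := by
  have : (2 * (Real.pi : ℂ) * Complex.I * (((m : ℝ) / 2 : ℝ) : ℂ)) =
      m * (Real.pi * Complex.I) := by push_cast; ring
  rw [e, this, Complex.exp_int_mul, Complex.exp_pi_mul_I]
  exact hm.neg_one_zpow

lemma e_sum {ι : Type*} (s : Finset ι) (f : ι → ℝ) :
    e (∑ i ∈ s, f i) = ∏ i ∈ s, e (f i) := by
  induction s using Finset.cons_induction with
  | empty => simp [e]
  | cons i s hi ih => rw [Finset.sum_cons, Finset.prod_cons, e_add, ih]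

/-- The one-dimensional Gauss-type sum vanishes when `4 ∣ q` and `m` is odd. -/
lemma gauss_sum_zero (q : ℕ) (hq0 : 0 < q) (hq4 : 4 ∣ q) (a m : ℤ) (hm : Odd m) :
    ∑ x ∈ Finset.range q, e (((a * (x : ℤ) ^ 2 + (x : ℤ) * m : ℤ) : ℝ) / q) = 0 := by
  obtain ⟨s, rfl⟩ := hq4
  have hs0 : 0 < s := by omega
  set f : ℕ → ℂ := fun x => e (((a * (x : ℤ) ^ 2 + (x : ℤ) * m : ℤ) : ℝ) / (4 * s : ℕ)) with hf
  have hshift : ∀ x : ℕ, f (2 * s + x) = - f x := by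
    intro x
    have hsr : ((s : ℝ)) ≠ 0 := by positivity
    have harg : ((a * ((2 * s + x : ℕ) : ℤ) ^ 2 + ((2 * s + x : ℕ) : ℤ) * m : ℤ) : ℝ) / (4 * s : ℕ)
        = ((a * x + a * s : ℤ) : ℝ) + (m : ℝ) / 2
          + ((a * (x : ℤ) ^ 2 + (x : ℤ) * m : ℤ) : ℝ) / (4 * s : ℕ) := by
      push_cast
      field_simp
      ring
    simp only [hf]
    rw [harg, e_add, e_add, e_int, e_half_odd m hm]
    ring
  have hsplit : (2 * s) + (2 * s) = 4 * s := by ring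
  rw [← hsplit, Finset.range_eq_Ico,
    ← Finset.sum_Ico_consecutive (fun x => f x) (Nat.zero_le (2 * s)) (by omega : 2 * s ≤ 2 * s + 2 * s),
    Finset.sum_Ico_eq_sum_range]
  rw [Finset.sum_Ico_eq_sum_range]
  simp only [Nat.sub_zero, Nat.zero_add, Nat.add_sub_cancel_left]
  have : ∑ x ∈ Finset.range (2 * s), f (2 * s + x) = -∑ x ∈ Finset.range (2 * s), f x := by
    rw [← Finset.sum_neg_distrib]
    exact Finset.sum_congr rfl fun x _ => hshift x
  rw [this]; ring

theorem stmt_3 (q N : ℕ) (hq0 : 0 < q) (hN0 : 0 < N) (hq4 : 4 ∣ q) (hN4 : 4 ∣ N)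
    (c : Fin 4 → ℤ) (hc : ∃ i, Odd (c i)) :
    Sq q (N : ℤ) c = 0 := by
  obtain ⟨i0, hi0⟩ := hc
  rw [Sq]
  apply Finset.sum_eq_zero
  intro a _
  -- split the exponential into a product over coordinates
  have hsummand : ∀ b : Fin 4 → Fin q,
      e ((((a : ℤ) * (F (fun i => ((b i : ℕ) : ℤ)) - N) +
            ∑ i, ((b i : ℕ) : ℤ) * c i : ℤ) : ℝ) / q)
      = e (((-( (a : ℤ) * N) : ℤ) : ℝ) / q) *
          ∏ i, e ((((a : ℤ) * ((b i : ℕ) : ℤ) ^ 2 + ((b i : ℕ) : ℤ) * c i : ℤ) : ℝ) / q) := by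
    intro b
    have hnum : ((a : ℤ) * (F (fun i => ((b i : ℕ) : ℤ)) - N) +
            ∑ i, ((b i : ℕ) : ℤ) * c i : ℤ)
        = (-( (a : ℤ) * N)) + ∑ i, ((a : ℤ) * ((b i : ℕ) : ℤ) ^ 2 + ((b i : ℕ) : ℤ) * c i) := by
      rw [F, Finset.sum_add_distrib, mul_sub, Finset.mul_sum]
      ring
    rw [hnum]
    push_cast
    rw [add_div, Finset.sum_div, e_add, e_sum]
  rw [Finset.sum_congr rfl fun b _ => hsummand b, ← Finset.mul_sum]
  have hfact : (∑ b : Fin 4 → Fin q,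
      ∏ i, e ((((a : ℤ) * ((b i : ℕ) : ℤ) ^ 2 + ((b i : ℕ) : ℤ) * c i : ℤ) : ℝ) / q))
      = ∏ i, ∑ x : Fin q, e ((((a : ℤ) * ((x : ℕ) : ℤ) ^ 2 + ((x : ℕ) : ℤ) * c i : ℤ) : ℝ) / q) := by
    rw [Fintype.prod_sum]
  rw [hfact]
  have hz : (∑ x : Fin q, e ((((a : ℤ) * ((x : ℕ) : ℤ) ^ 2 + ((x : ℕ) : ℤ) * c i0 : ℤ) : ℝ) / q)) = 0 := by
    rw [Fin.sum_univ_eq_sum_range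
      (fun x => e ((((a : ℤ) * (x : ℤ) ^ 2 + (x : ℤ) * c i0 : ℤ) : ℝ) / q))]
    exact gauss_sum_zero q hq0 hq4 a (c i0) hi0
  rw [Finset.prod_eq_zero (Finset.mem_univ i0) hz, mul_zero]
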